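/- Let g be a finite-dimensional simple Lie algebra over ℂ, (x, 𝔥, y) a principal sl₂-triple, and P the canonical splitting of ad y. Then for every h ∈ z(x) and every u ∈ g with ⁅y + h, u⁆ = 0, the element u + P(⁅h, u⁆) lies in z(y), i.e. ⁅y, u + P(⁅h, u⁆)⁆ = 0. In other words, the map u ↦ u + P(⁅h, u⁆) carries the centralizer of y + h into the centralizer of y. -/

import Mathlib

/-- Let `g` be a finite-dimensional simple Lie algebra over `ℂ`,
`(x, H, y)` a principal `sl₂`-triple, and `P` the canonical splitting of `ad y`.
Then for every `h ∈ z(x)` and every `u ∈ g` with `⁅y + h, u⁆ = 0`, the element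
`u + P ⁅h, u⁆` lies in the centralizer of `y`: `⁅y, u + P ⁅h, u⁆⁆ = 0`. -/
theorem centralizer_slice_maps_to_centralizer_y
    {g : Type*} [LieRing g] [LieAlgebra ℂ g] [FiniteDimensional ℂ g]
    [LieAlgebra.IsSimple ℂ g]
    (x H y : g)
    (hHx : ⁅H, x⁆ = (2 : ℂ) • x) (hHy : ⁅H, y⁆ = (-2 : ℂ) • y) (hxy : ⁅x, y⁆ = H)
    (hregx : Module.finrank ℂ (LinearMap.ker (LieAlgebra.ad ℂ g x)) = LieAlgebra.rank ℂ g)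
    (hregy : Module.finrank ℂ (LinearMap.ker (LieAlgebra.ad ℂ g y)) = LieAlgebra.rank ℂ g)
    (P : g →ₗ[ℂ] g)
    (hP0 : ∀ u : g, ⁅x, u⁆ = 0 → P u = 0)
    (hP1 : LinearMap.range P ≤ LinearMap.range (LieAlgebra.ad ℂ g x))
    (hP2 : ∀ u : g, ⁅x, u - ⁅y, P u⁆⁆ = 0)
    (h : g) (hh : ⁅x, h⁆ = 0)
    (u : g) (hu : ⁅y + h, u⁆ = 0) :
    ⁅y, u + P ⁅h, u⁆⁆ = 0 := by
  set K := LinearMap.ker (LieAlgebra.ad ℂ g x) with hK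
  set R := LinearMap.range (LieAlgebra.ad ℂ g y) with hR
  -- K ⊔ R = ⊤
  have hsup : K ⊔ R = ⊤ := by
    rw [eq_top_iff]
    intro v _
    have : v = (v - ⁅y, P v⁆) + ⁅y, P v⁆ := by abel
    rw [this]
    exact Submodule.add_mem_sup (by simpa [hK, LieAlgebra.ad_apply] using hP2 v)
      ⟨P v, rfl⟩
  -- dimensions
  have hrank : Module.finrank ℂ R + Module.finrank ℂ (LinearMap.ker (LieAlgebra.ad ℂ g y))
      = Module.finrank ℂ g := LinearMap.finrank_range_add_finrank_ker _
  have hdim : Module.finrank ℂ K + Module.finrank ℂ R = Module.finrank ℂ g := by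
    rw [hregx, ← hregy] at *
    omega
  have hinf : K ⊓ R = ⊥ := by
    have h1 := Submodule.finrank_sup_add_finrank_inf_eq K R
    rw [hsup, finrank_top, hdim] at h1
    have : Module.finrank ℂ ↥(K ⊓ R) = 0 := by omega
    exact Submodule.finrank_eq_zero.mp this
  -- ⁅y, u⁆ = -⁅h, u⁆
  have hyu : ⁅y, u⁆ = -⁅h, u⁆ := by
    have h0 : ⁅y, u⁆ + ⁅h, u⁆ = 0 := by rw [← add_lie]; exact hu
    linear_combination (norm := abel) h0
  set v := ⁅h, u⁆ with hv
  have hvR : v ∈ R := ⟨-u, by simp [LieAlgebra.ad_apply, hyu]⟩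
  have hmem : v - ⁅y, P v⁆ ∈ K ⊓ R := by
    refine ⟨by simpa [hK, LieAlgebra.ad_apply] using hP2 v, ?_⟩
    exact sub_mem hvR ⟨P v, rfl⟩
  rw [hinf] at hmem
  have hveq : v = ⁅y, P v⁆ := by
    have := (Submodule.mem_bot ℂ).mp hmem
    linear_combination (norm := abel) this
  rw [lie_add, hyu, ← hveq, neg_add_cancel]
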